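/- Let φ : M_n(F) → M_n(F) be a nonzero map satisfying φ(X ∘ Y) = φ(X) ∘ φ(Y) for all X, Y ∈ M_n(F) and φ(0) = 0. Then for every idempotent P ∈ M_n(F), rank(φ(P)) = rank(P). -/

import Mathlib

open Matrix

namespace Stmt12

variable {F : Type*} [Field F] {n : ℕ}

/-- normalized Jordan product -/
def jord (X Y : Matrix (Fin n) (Fin n) F) : Matrix (Fin n) (Fin n) F :=
  (2:F)⁻¹ • (X * Y + Y * X)

lemma half_two_smul (h2 : (2:F) ≠ 0) (X : Matrix (Fin n) (Fin n) F) :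
    (2:F)⁻¹ • ((2:F) • X) = X := by
  rw [smul_smul, inv_mul_cancel₀ h2, one_smul]

lemma jord_self (h2 : (2:F) ≠ 0) (X : Matrix (Fin n) (Fin n) F) : jord X X = X * X := by
  rw [jord, ← two_smul F (X*X), half_two_smul h2]

@[simp] lemma jord_zero_left (Y : Matrix (Fin n) (Fin n) F) : jord (0 : Matrix (Fin n) (Fin n) F) Y = 0 := by
  simp [jord]

lemma jord_smul2 (h2 : (2:F) ≠ 0) {X Y Z : Matrix (Fin n) (Fin n) F}
    (h : X * Y + Y * X = (2:F) • Z) : jord X Y = Z := by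
  rw [jord, h, half_two_smul h2]

lemma orth_of_jord (h2 : (2:F) ≠ 0) {p q : Matrix (Fin n) (Fin n) F}
    (hp : p*p = p) (hq : q*q = q) (h : jord p q = 0) : p*q = 0 ∧ q*p = 0 := by
  have h' : p*q + q*p = 0 := by
    have := congrArg (fun z => (2:F) • z) h
    simpa [jord, smul_smul, mul_inv_cancel₀ h2] using this
  have e1 := congrArg (fun z => p * z) h'
  simp only [mul_add, ← mul_assoc, hp, mul_zero] at e1
  have e2 := congrArg (fun z => z * p) h'
  simp only [add_mul, mul_assoc, hp, zero_mul] at e2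
  rw [← mul_assoc] at e2
  -- e1 : p*q + p*q*p = 0, e2 : p*q*p + q*p = 0
  have hcomm : p*q = q*p := by
    have h3 := e1.trans e2.symm
    rw [add_comm (p*q*p)] at h3
    exact add_right_cancel h3
  have h2pq : (2:F) • (p*q) = 0 := by
    rw [two_smul, hcomm] ; nth_rewrite 1 [← hcomm]; exact h'
  have hpq : p*q = 0 := by
    have := congrArg (fun z => (2:F)⁻¹ • z) h2pq
    simpa [half_two_smul h2] using this
  exact ⟨hpq, hcomm ▸ hpq⟩

lemma le_of_jord (h2 : (2:F) ≠ 0) {p q : Matrix (Fin n) (Fin n) F}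
    (hp : p*p = p) (hq : q*q = q) (h : jord q p = q) : q*p = q ∧ p*q = q := by
  have h' : q*p + p*q = (2:F) • q := by
    have := congrArg (fun z => (2:F) • z) h
    simpa [jord, smul_smul, mul_inv_cancel₀ h2] using this
  have e1 := congrArg (fun z => q * z) h'
  simp only [mul_add, ← mul_assoc, hq, mul_smul_comm] at e1
  have e2 := congrArg (fun z => z * q) h'
  simp only [add_mul, mul_assoc, hq, smul_mul_assoc] at e2
  rw [← mul_assoc] at e2
  -- e1 : q*p + q*p*q = 2•q, e2 : q*p*q + p*q = 2•q
  have hcomm : q*p = p*q := by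
    have h3 := e1.trans e2.symm
    rw [add_comm (q*p*q)] at h3
    exact add_right_cancel h3
  have h2qp : (2:F) • (q*p) = (2:F) • q := by
    rw [two_smul]; nth_rewrite 2 [hcomm]; exact h'
  have hqp : q*p = q := by
    have := congrArg (fun z => (2:F)⁻¹ • z) h2qp
    simpa [half_two_smul h2] using this
  exact ⟨hqp, hcomm ▸ hqp⟩


/-- diagonal 0/1 matrix supported on a finset -/
def dQ (S : Finset (Fin n)) : Matrix (Fin n) (Fin n) F :=
  Matrix.diagonal (fun i => if i ∈ S then (1:F) else 0)

@[simp] lemma dQ_univ : (dQ Finset.univ : Matrix (Fin n) (Fin n) F) = 1 := by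
  simp [dQ]

@[simp] lemma dQ_empty : (dQ ∅ : Matrix (Fin n) (Fin n) F) = 0 := by
  simp [dQ]

lemma diagonal_mul_std (d : Fin n → F) (s t : Fin n) (c : F) :
    Matrix.diagonal d * Matrix.single s t c = Matrix.single s t (d s * c) := by
  ext i j
  rw [Matrix.diagonal_mul]
  by_cases h : s = i ∧ t = j
  · obtain ⟨rfl, rfl⟩ := h
    simp [Matrix.single_apply_same]
  · rw [Matrix.single_apply_of_ne _ _ _ _ _ h,
      Matrix.single_apply_of_ne _ _ _ _ _ h, mul_zero]

lemma std_mul_diagonal (d : Fin n → F) (s t : Fin n) (c : F) :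
    Matrix.single s t c * Matrix.diagonal d = Matrix.single s t (c * d t) := by
  ext i j
  rw [Matrix.mul_diagonal]
  by_cases h : s = i ∧ t = j
  · obtain ⟨rfl, rfl⟩ := h
    simp [Matrix.single_apply_same]
  · rw [Matrix.single_apply_of_ne _ _ _ _ _ h,
      Matrix.single_apply_of_ne _ _ _ _ _ h, zero_mul]

lemma dQ_mul_dQ (S T : Finset (Fin n)) :
    (dQ S : Matrix (Fin n) (Fin n) F) * dQ T = dQ (S ∩ T) := by
  ext i j
  rw [dQ, dQ, dQ, Matrix.diagonal_mul_diagonal]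
  by_cases hij : i = j
  · subst hij
    by_cases hS : i ∈ S <;> by_cases hT : i ∈ T <;> simp [hS, hT]
  · simp [Matrix.diagonal_apply_ne _ hij]

lemma dQ_idem (S : Finset (Fin n)) :
    (dQ S : Matrix (Fin n) (Fin n) F) * dQ S = dQ S := by
  rw [dQ_mul_dQ, Finset.inter_self]

lemma dQ_mul_std_mem {S : Finset (Fin n)} {s : Fin n} (hs : s ∈ S) (t : Fin n) :
    (dQ S : Matrix (Fin n) (Fin n) F) * Matrix.single s t 1 = Matrix.single s t 1 := by
  rw [dQ, diagonal_mul_std]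
  simp [hs]

lemma dQ_mul_std_not_mem {S : Finset (Fin n)} {s : Fin n} (hs : s ∉ S) (t : Fin n) :
    (dQ S : Matrix (Fin n) (Fin n) F) * Matrix.single s t 1 = 0 := by
  rw [dQ, diagonal_mul_std]
  simp [hs]

lemma std_mul_dQ_not_mem {S : Finset (Fin n)} {t : Fin n} (ht : t ∉ S) (s : Fin n) :
    (Matrix.single s t 1 : Matrix (Fin n) (Fin n) F) * dQ S = 0 := by
  rw [dQ, std_mul_diagonal]
  simp [ht]

lemma dQ_insert {S : Finset (Fin n)} {x : Fin n} (hx : x ∉ S) :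
    (dQ (insert x S) : Matrix (Fin n) (Fin n) F) = Matrix.single x x 1 + dQ S := by
  ext i j
  by_cases hij : i = j
  · subst hij
    by_cases hix : i = x
    · subst hix; simp [dQ, hx]
    · simp [dQ, Matrix.single_apply_of_ne _ _ _ _ _ (fun h => hix h.1.symm),
        Finset.mem_insert, hix]
  · simp [dQ, Matrix.diagonal_apply_ne _ hij,
      Matrix.single_apply_of_ne _ _ _ _ _ (fun h => hij (h.1.symm.trans h.2))]


lemma chain_step (h2 : (2:F) ≠ 0) {ψ : Matrix (Fin n) (Fin n) F → Matrix (Fin n) (Fin n) F}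
    (hj : ∀ X Y, ψ (jord X Y) = jord (ψ X) (ψ Y))
    {S : Finset (Fin n)} {s₀ t : Fin n} (hs₀ : s₀ ∈ S) (ht : t ∉ S)
    (hz : ψ (dQ S) = 0) : ψ (dQ (insert t S)) = 0 := by
  set E : Matrix (Fin n) (Fin n) F := Matrix.single s₀ t 1 with hE
  set E' : Matrix (Fin n) (Fin n) F := Matrix.single t s₀ 1 with hE'
  set Q' : Matrix (Fin n) (Fin n) F := dQ (S.erase s₀) with hQ'
  have hte : t ∉ S.erase s₀ := fun h => ht (Finset.mem_of_mem_erase h)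
  have hse : s₀ ∉ S.erase s₀ := Finset.notMem_erase s₀ S
  have hSQ' : (dQ S : Matrix (Fin n) (Fin n) F) * Q' = Q' := by
    rw [hQ', dQ_mul_dQ, Finset.inter_eq_right.mpr (Finset.erase_subset _ _)]
  have hQ'S : Q' * (dQ S : Matrix (Fin n) (Fin n) F) = Q' := by
    rw [hQ', dQ_mul_dQ, Finset.inter_eq_left.mpr (Finset.erase_subset _ _)]
  have step1 : jord (dQ S) ((2:F) • E + Q') = E + Q' := by
    apply jord_smul2 h2
    rw [mul_add, add_mul, mul_smul_comm, smul_mul_assoc,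
      hE, dQ_mul_std_mem hs₀, std_mul_dQ_not_mem ht, hSQ', hQ'S]
    module
  have step2 : jord (E + Q') ((2:F) • E' + Q') = dQ (insert t S) := by
    apply jord_smul2 h2
    have h1 : E * E' = Matrix.single s₀ s₀ 1 := by
      rw [hE, hE', Matrix.single_mul_single_same, one_mul]
    have h2' : E' * E = Matrix.single t t 1 := by
      rw [hE, hE', Matrix.single_mul_single_same, one_mul]
    have h3 : E * Q' = 0 := by rw [hE, hQ', std_mul_dQ_not_mem hte]
    have h4 : Q' * E' = 0 := by rw [hE', hQ', dQ_mul_std_not_mem hte]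
    have h5 : E' * Q' = 0 := by rw [hE', hQ', std_mul_dQ_not_mem hse]
    have h6 : Q' * E = 0 := by rw [hE, hQ', dQ_mul_std_not_mem hse]
    have h7 : Q' * Q' = Q' := by rw [hQ', dQ_idem]
    have h8 : (dQ (insert t S) : Matrix (Fin n) (Fin n) F)
        = Matrix.single t t 1 + (Matrix.single s₀ s₀ 1 + Q') := by
      rw [dQ_insert ht]
      congr 1
      conv_lhs => rw [← Finset.insert_erase hs₀]
      rw [dQ_insert hse, hQ']
    simp only [mul_add, add_mul, mul_smul_comm, smul_mul_assoc, h1, h2', h3, h4, h5, h6, h7, h8]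
    module
  have ha : ψ (E + Q') = 0 := by
    rw [← step1, hj, hz, jord_zero_left]
  rw [← step2, hj, ha, jord_zero_left]

lemma chain (h2 : (2:F) ≠ 0) {ψ : Matrix (Fin n) (Fin n) F → Matrix (Fin n) (Fin n) F}
    (hj : ∀ X Y, ψ (jord X Y) = jord (ψ X) (ψ Y)) :
    ∀ (k : ℕ) (S : Finset (Fin n)), (Finset.univ \ S).card = k → S.Nonempty →
      ψ (dQ S) = 0 → ψ (1 : Matrix (Fin n) (Fin n) F) = 0 := by
  intro k
  induction k with
  | zero =>
    intro S hcard _ hz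
    have : S = Finset.univ := by
      have := Finset.card_eq_zero.mp hcard
      have hsub := Finset.sdiff_eq_empty_iff_subset.mp this
      exact Finset.eq_univ_of_forall (fun x => hsub (Finset.mem_univ x))
    rw [this, dQ_univ] at hz
    exact hz
  | succ k ih =>
    intro S hcard hne hz
    have hpos : 0 < (Finset.univ \ S).card := by omega
    obtain ⟨t, htmem⟩ := Finset.card_pos.mp hpos
    have ht : t ∉ S := (Finset.mem_sdiff.mp htmem).2
    obtain ⟨s₀, hs₀⟩ := hne
    have hz' := chain_step h2 hj hs₀ ht hz
    apply ih (insert t S) ?_ ⟨s₀, Finset.mem_insert_of_mem hs₀⟩ hz'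
    rw [Finset.sdiff_insert, Finset.card_erase_of_mem htmem, hcard]
    omega


lemma rank_le_of_mul_eq {p q : Matrix (Fin n) (Fin n) F} (h : p * q = p) :
    p.rank ≤ q.rank := by
  conv_lhs => rw [← h]
  exact Matrix.rank_mul_le_right p q

lemma rank_pos_of_ne_zero {p : Matrix (Fin n) (Fin n) F} (h : p ≠ 0) : 1 ≤ p.rank := by
  by_contra hc
  have hr : p.rank = 0 := by omega
  apply h
  have hrange : LinearMap.range p.mulVecLin = ⊥ := Submodule.finrank_eq_zero.mp hr
  have hml : p.mulVecLin = 0 := LinearMap.range_eq_bot.mp hrange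
  ext i j
  have := congrFun (congrArg (fun f => f.toFun) hml) (Pi.single j 1)
  have h2 : p.mulVec (Pi.single j 1) = 0 := this
  have h3 := congrFun h2 i
  rw [Matrix.mulVec_single_one] at h3
  exact h3

lemma rank_add_of_orth {p q : Matrix (Fin n) (Fin n) F} (hp : p*p = p) (hq : q*q = q)
    (hpq : p*q = 0) (hqp : q*p = 0) : p.rank + q.rank ≤ (p+q).rank := by
  have hsp : (p+q) * p = p := by rw [add_mul, hp, hqp, add_zero]
  have hsq : (p+q) * q = q := by rw [add_mul, hpq, hq, zero_add]
  have hrp : LinearMap.range p.mulVecLin ≤ LinearMap.range (p+q).mulVecLin := by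
    conv_lhs => rw [← hsp]
    rw [Matrix.mulVecLin_mul]
    exact LinearMap.range_comp_le_range _ _
  have hrq : LinearMap.range q.mulVecLin ≤ LinearMap.range (p+q).mulVecLin := by
    conv_lhs => rw [← hsq]
    rw [Matrix.mulVecLin_mul]
    exact LinearMap.range_comp_le_range _ _
  have hdisj : Disjoint (LinearMap.range p.mulVecLin) (LinearMap.range q.mulVecLin) := by
    rw [Submodule.disjoint_def]
    intro x hxp hxq
    obtain ⟨y, hy⟩ := hxp
    obtain ⟨z, hz⟩ := hxq
    have hfix : p.mulVecLin x = x := by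
      rw [← hy, ← LinearMap.comp_apply, ← Matrix.mulVecLin_mul, hp]
    have hzero : p.mulVecLin x = 0 := by
      rw [← hz, ← LinearMap.comp_apply, ← Matrix.mulVecLin_mul, hpq,
        Matrix.mulVecLin_zero, LinearMap.zero_apply]
    rw [← hfix, hzero]
  have hsum := Submodule.finrank_sup_add_finrank_inf_eq
    (LinearMap.range p.mulVecLin) (LinearMap.range q.mulVecLin)
  rw [hdisj.eq_bot, finrank_bot, add_zero] at hsum
  calc p.rank + q.rank
      = Module.finrank F ↥(LinearMap.range p.mulVecLin ⊔ LinearMap.range q.mulVecLin) :=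
        hsum.symm
    _ ≤ (p+q).rank := Submodule.finrank_mono (sup_le hrp hrq)


lemma sum_orth (q : Fin n → Matrix (Fin n) (Fin n) F) :
    ∀ T : Finset (Fin n), (∀ i ∈ T, q i * q i = q i) →
      (∀ i ∈ T, ∀ j ∈ T, i ≠ j → q i * q j = 0) → (∀ i ∈ T, q i ≠ 0) →
      (∑ i ∈ T, q i) * (∑ i ∈ T, q i) = ∑ i ∈ T, q i ∧ T.card ≤ (∑ i ∈ T, q i).rank := by
  intro T
  induction T using Finset.induction_on with
  | empty => simp
  | insert a T ha ih =>
    intro hqi horth hne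
    have hmem : a ∈ insert a T := Finset.mem_insert_self a T
    have hTsub : ∀ i ∈ T, i ∈ insert a T := fun i hi => Finset.mem_insert_of_mem hi
    obtain ⟨hidem, hcard⟩ := ih (fun i hi => hqi i (hTsub i hi))
      (fun i hi j hj hij => horth i (hTsub i hi) j (hTsub j hj) hij)
      (fun i hi => hne i (hTsub i hi))
    set s : Matrix (Fin n) (Fin n) F := ∑ i ∈ T, q i with hs
    have hqas : q a * s = 0 := by
      rw [hs, Finset.mul_sum]
      refine Finset.sum_eq_zero (fun i hi => ?_)
      exact horth a hmem i (hTsub i hi) (fun h => ha (h ▸ hi))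
    have hsqa : s * q a = 0 := by
      rw [hs, Finset.sum_mul]
      refine Finset.sum_eq_zero (fun i hi => ?_)
      exact horth i (hTsub i hi) a hmem (fun h => ha (h ▸ hi))
    have hsum : ∑ i ∈ insert a T, q i = q a + s := Finset.sum_insert ha
    have hqa : q a * q a = q a := hqi a hmem
    constructor
    · rw [hsum, add_mul, mul_add, mul_add, hqa, hqas, hsqa, hidem]
      abel
    · rw [hsum, Finset.card_insert_of_notMem ha]
      have h1 := rank_add_of_orth hqa hidem hqas hsqa
      have h2 := rank_pos_of_ne_zero (hne a hmem)
      omega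

lemma rank_lower (p : Matrix (Fin n) (Fin n) F) (q : Fin n → Matrix (Fin n) (Fin n) F)
    (T : Finset (Fin n))
    (hqi : ∀ i ∈ T, q i * q i = q i)
    (horth : ∀ i ∈ T, ∀ j ∈ T, i ≠ j → q i * q j = 0)
    (hne : ∀ i ∈ T, q i ≠ 0)
    (hle : ∀ i ∈ T, q i * p = q i) :
    T.card ≤ p.rank := by
  obtain ⟨hidem, hcard⟩ := sum_orth q T hqi horth hne
  have hsp : (∑ i ∈ T, q i) * p = ∑ i ∈ T, q i := by
    rw [Finset.sum_mul]
    exact Finset.sum_congr rfl (fun i hi => hle i hi)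
  exact hcard.trans (rank_le_of_mul_eq hsp)

lemma rank_upper (p : Matrix (Fin n) (Fin n) F) (hp : p * p = p)
    (q : Fin n → Matrix (Fin n) (Fin n) F) (T : Finset (Fin n))
    (hqi : ∀ i ∈ T, q i * q i = q i)
    (horth : ∀ i ∈ T, ∀ j ∈ T, i ≠ j → q i * q j = 0)
    (hne : ∀ i ∈ T, q i ≠ 0)
    (ho1 : ∀ i ∈ T, q i * p = 0)
    (ho2 : ∀ i ∈ T, p * q i = 0) :
    p.rank + T.card ≤ n := by
  obtain ⟨hidem, hcard⟩ := sum_orth q T hqi horth hne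
  set s : Matrix (Fin n) (Fin n) F := ∑ i ∈ T, q i with hs
  have hsp : s * p = 0 := by
    rw [hs, Finset.sum_mul]
    exact Finset.sum_eq_zero (fun i hi => ho1 i hi)
  have hps : p * s = 0 := by
    rw [hs, Finset.mul_sum]
    exact Finset.sum_eq_zero (fun i hi => ho2 i hi)
  have h1 := rank_add_of_orth hp hidem hps hsp
  have h2 : (p + s).rank ≤ n := by
    have := Matrix.rank_le_card_width (p + s)
    simpa using this
  omega


lemma exists_conj_diag (P : Matrix (Fin n) (Fin n) F) (hP : P * P = P) :
    ∃ B C : Matrix (Fin n) (Fin n) F, B * C = 1 ∧ C * B = 1 ∧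
      P = B * (dQ (Finset.univ.filter (fun i : Fin n => (i:ℕ) < P.rank))
        : Matrix (Fin n) (Fin n) F) * C := by
  classical
  set f := P.mulVecLin with hf
  have hff : f ∘ₗ f = f := by rw [hf, ← Matrix.mulVecLin_mul, hP]
  have hproj : LinearMap.IsProj (LinearMap.range f) f := by
    refine ⟨fun x => LinearMap.mem_range_self f x, ?_⟩
    rintro x ⟨y, rfl⟩
    exact DFunLike.congr_fun hff y
  have hcompl := hproj.isCompl
  have hrr : Module.finrank F ↥(LinearMap.range f) = P.rank := rfl
  set r := P.rank with hrdef
  set w := Module.finrank F ↥(LinearMap.ker f) with hwdef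
  have hrw : r + w = n := by
    have h1 := Submodule.finrank_add_eq_of_isCompl hcompl
    rw [hrr, Module.finrank_fin_fun] at h1
    exact h1
  let bU : Module.Basis (Fin r) F ↥(LinearMap.range f) := Module.finBasisOfFinrankEq F _ hrr
  let bW : Module.Basis (Fin w) F ↥(LinearMap.ker f) := Module.finBasisOfFinrankEq F _ rfl
  let e0 := Submodule.prodEquivOfIsCompl _ _ hcompl
  let bb : Module.Basis (Fin r ⊕ Fin w) F (Fin n → F) := (bU.prod bW).map e0
  let eidx : (Fin r ⊕ Fin w) ≃ Fin n := finSumFinEquiv.trans (finCongr hrw)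
  let b : Module.Basis (Fin n) F (Fin n → F) := bb.reindex eidx
  have hbdiag : ∀ j : Fin n, f (b j) = (if (j:ℕ) < r then (1:F) else 0) • b j := by
    intro j
    have hbj : b j = bb (eidx.symm j) := bb.reindex_apply eidx j
    obtain ⟨sj, hsj⟩ : ∃ sj, eidx.symm j = sj := ⟨_, rfl⟩
    have hjs : j = eidx sj := by rw [← hsj, Equiv.apply_symm_apply]
    cases sj with
    | inl k =>
      have hval : (j : ℕ) = (k : ℕ) := by
        rw [hjs]
        simp [eidx, finSumFinEquiv_apply_left]
      have hlt : (j : ℕ) < r := by rw [hval]; exact k.2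
      have hmem : bb (Sum.inl k) = (bU k : Fin n → F) := by
        simp [bb, e0, Module.Basis.prod_apply]
      rw [hbj, hsj, if_pos hlt, one_smul, hmem]
      exact hproj.map_id _ (bU k).2
    | inr k =>
      have hval : (j : ℕ) = r + (k : ℕ) := by
        rw [hjs]
        simp [eidx, finSumFinEquiv_apply_right]
      have hlt : ¬ (j : ℕ) < r := by omega
      have hmem : bb (Sum.inr k) = (bW k : Fin n → F) := by
        simp [bb, e0, Module.Basis.prod_apply]
      rw [hbj, hsj, if_neg hlt, zero_smul, hmem]
      exact (bW k).2
  have hkey : LinearMap.toMatrix b b f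
      = dQ (Finset.univ.filter (fun i : Fin n => (i:ℕ) < r)) := by
    ext i j
    rw [LinearMap.toMatrix_apply, hbdiag j, _root_.map_smul, b.repr_self]
    by_cases hij : i = j
    · subst hij
      simp only [dQ, Matrix.diagonal_apply_eq, Finset.mem_filter, Finset.mem_univ, true_and]
      split_ifs <;> simp
    · rw [dQ, Matrix.diagonal_apply_ne _ hij]
      split_ifs <;>
        simp [Finsupp.single_apply, if_neg (fun h : j = i => hij h.symm)]
  let c : Module.Basis (Fin n) F (Fin n → F) := Pi.basisFun F (Fin n)
  refine ⟨c.toMatrix ⇑b, b.toMatrix ⇑c, Module.Basis.toMatrix_mul_toMatrix_flip c b,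
    Module.Basis.toMatrix_mul_toMatrix_flip b c, ?_⟩
  have hconj := basis_toMatrix_mul_linearMap_toMatrix_mul_basis_toMatrix
    (b := c) (b' := b) (c := c) (c' := b) (f := f)
  rw [hkey] at hconj
  rw [hconj, LinearMap.toMatrix_eq_toMatrix', hf, ← Matrix.toLin'_apply',
    LinearMap.toMatrix'_toLin']


lemma jord_dQ (h2 : (2:F) ≠ 0) (S T : Finset (Fin n)) :
    jord (dQ S : Matrix (Fin n) (Fin n) F) (dQ T) = dQ (S ∩ T) := by
  rw [jord, dQ_mul_dQ, dQ_mul_dQ, Finset.inter_comm T S, ← two_smul F, half_two_smul h2]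

lemma jord_one_left (h2 : (2:F) ≠ 0) (X : Matrix (Fin n) (Fin n) F) :
    jord (1 : Matrix (Fin n) (Fin n) F) X = X := by
  rw [jord, one_mul, mul_one, ← two_smul F, half_two_smul h2]

lemma card_filter_lt {r : ℕ} (hr : r ≤ n) :
    (Finset.univ.filter (fun i : Fin n => (i:ℕ) < r)).card = r := by
  have heq : Finset.univ.filter (fun i : Fin n => (i:ℕ) < r)
      = (Finset.range r).attachFin
        (fun m hm => lt_of_lt_of_le (Finset.mem_range.mp hm) hr) := by
    ext i
    simp [Finset.mem_attachFin, Finset.mem_range]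
  rw [heq, Finset.card_attachFin, Finset.card_range]

end Stmt12

open Stmt12 in
theorem stmt_12 {F : Type*} [Field F] (h2 : (2 : F) ≠ 0) (n : ℕ)
    (φ : Matrix (Fin n) (Fin n) F → Matrix (Fin n) (Fin n) F)
    (hφ : ∀ X Y : Matrix (Fin n) (Fin n) F,
      φ ((2 : F)⁻¹ • (X * Y + Y * X)) = (2 : F)⁻¹ • (φ X * φ Y + φ Y * φ X))
    (hnz : φ ≠ 0) (h0 : φ 0 = 0)
    (P : Matrix (Fin n) (Fin n) F) (hP : P * P = P) :
    (φ P).rank = P.rank := by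
  classical
  have hj : ∀ X Y, φ (jord X Y) = jord (φ X) (φ Y) := hφ
  obtain ⟨B, C, hBC, hCB, hPeq⟩ := exists_conj_diag P hP
  set r := P.rank with hrdef
  set Sr := Finset.univ.filter (fun i : Fin n => (i:ℕ) < r) with hSrdef
  set ψ : Matrix (Fin n) (Fin n) F → Matrix (Fin n) (Fin n) F
    := fun X => φ (B * X * C) with hψdef
  have hkeymul : ∀ X Y : Matrix (Fin n) (Fin n) F, (B*X*C) * (B*Y*C) = B*(X*Y)*C := by
    intro X Y
    have h1 : B*X*C*B = B*X := by rw [mul_assoc (B*X) C B, hCB, mul_one]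
    calc (B*X*C) * (B*Y*C) = B*X*C*B*Y*C := by rw [← mul_assoc, ← mul_assoc]
    _ = (B*X)*Y*C := by rw [h1]
    _ = B*(X*Y)*C := by rw [mul_assoc B X Y]
  have hψj : ∀ X Y, ψ (jord X Y) = jord (ψ X) (ψ Y) := by
    intro X Y
    have hconj : B * jord X Y * C = jord (B*X*C) (B*Y*C) := by
      rw [jord, jord, hkeymul, hkeymul, mul_smul_comm, smul_mul_assoc, mul_add, add_mul]
    show φ (B * jord X Y * C) = jord (φ (B*X*C)) (φ (B*Y*C))
    rw [hconj]
    exact hj _ _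
  have hψ0 : ψ 0 = 0 := by
    show φ (B * 0 * C) = 0
    rw [mul_zero, zero_mul, h0]
  have hψD : ψ (dQ Sr) = φ P := (congrArg φ hPeq).symm
  have hidem : ∀ X : Matrix (Fin n) (Fin n) F, X * X = X → ψ X * ψ X = ψ X := by
    intro X hX
    have hh := hψj X X
    rw [jord_self h2, hX, jord_self h2] at hh
    exact hh.symm
  set p := φ P with hpdef
  have hpidem : p * p = p := by
    have := hidem (dQ Sr) (dQ_idem Sr)
    rwa [hψD] at this
  set q : Fin n → Matrix (Fin n) (Fin n) F := fun i => ψ (dQ {i}) with hqdef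
  have hqidem : ∀ i, q i * q i = q i := fun i => hidem _ (dQ_idem {i})
  have hqorth : ∀ i j, i ≠ j → q i * q j = 0 ∧ q j * q i = 0 := by
    intro i j hij
    have hdisj : ({i} : Finset (Fin n)) ∩ {j} = ∅ := by
      simp [Finset.singleton_inter_of_notMem, Finset.mem_singleton, hij]
    have hh := hψj (dQ {i}) (dQ {j})
    rw [jord_dQ h2, hdisj, dQ_empty, hψ0] at hh
    exact orth_of_jord h2 (hqidem i) (hqidem j) hh.symm
  have hqne : ∀ i, q i ≠ 0 := by
    intro i hzero
    have h1 : ψ (1 : Matrix (Fin n) (Fin n) F) = 0 :=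
      chain h2 hψj (Finset.univ \ {i}).card {i} rfl ⟨i, Finset.mem_singleton_self i⟩ hzero
    have hφ1 : φ 1 = 0 := by
      have hBB : B * 1 * C = 1 := by rw [mul_one, hBC]
      rw [hψdef] at h1
      simpa [hBB, hBC] using h1
    apply hnz
    funext X
    have h3 := hj 1 X
    rw [jord_one_left h2, hφ1, jord_zero_left] at h3
    exact h3
  have hlow : ∀ i ∈ Sr, q i * p = q i ∧ p * q i = q i := by
    intro i hi
    have hji : jord (dQ {i} : Matrix (Fin n) (Fin n) F) (dQ Sr) = dQ {i} := by
      rw [jord_dQ h2, Finset.singleton_inter_of_mem hi]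
    have hh := hψj (dQ {i}) (dQ Sr)
    rw [hji, hψD] at hh
    exact le_of_jord h2 hpidem (hqidem i) hh.symm
  have hupp : ∀ i ∉ Sr, q i * p = 0 ∧ p * q i = 0 := by
    intro i hi
    have hji : jord (dQ {i} : Matrix (Fin n) (Fin n) F) (dQ Sr) = 0 := by
      rw [jord_dQ h2, Finset.singleton_inter_of_notMem hi, dQ_empty]
    have hh := hψj (dQ {i}) (dQ Sr)
    rw [hji, hψD, hψ0] at hh
    exact orth_of_jord h2 (hqidem i) hpidem hh.symm
  have hrn : r ≤ n := by
    have := Matrix.rank_le_card_width P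
    simpa using this
  have hcardSr : Sr.card = r := card_filter_lt hrn
  have hlower : Sr.card ≤ p.rank :=
    rank_lower p q Sr (fun i _ => hqidem i)
      (fun i _ j _ hij => (hqorth i j hij).1)
      (fun i _ => hqne i) (fun i hi => (hlow i hi).1)
  set Src := Finset.univ.filter (fun i : Fin n => ¬ (i:ℕ) < r) with hSrcdef
  have hmemc : ∀ i ∈ Src, i ∉ Sr := by
    intro i hi hmem
    rw [hSrcdef, Finset.mem_filter] at hi
    rw [hSrdef, Finset.mem_filter] at hmem
    exact hi.2 hmem.2
  have hupper : p.rank + Src.card ≤ n :=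
    rank_upper p hpidem q Src (fun i _ => hqidem i)
      (fun i _ j _ hij => (hqorth i j hij).1)
      (fun i _ => hqne i)
      (fun i hi => (hupp i (hmemc i hi)).1)
      (fun i hi => (hupp i (hmemc i hi)).2)
  have hsplit : Sr.card + Src.card = n := by
    have := Finset.card_filter_add_card_filter_not
      (s := (Finset.univ : Finset (Fin n))) (p := fun i : Fin n => (i:ℕ) < r)
    simpa [hSrdef, hSrcdef] using this
  show p.rank = r
  omega
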